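/- The set {Sym(X^(α)) : |α| = m} of symmetrized monomials of degree m forms a basis of the space ℛ^m of homogeneous regular polynomials of degree m in the free associative algebra on X₁,…,Xₙ over a field of characteristic zero. -/

import Mathlib

open scoped BigOperators

noncomputable section

/-- The word `X₁^{α₁} ⋯ Xₙ^{αₙ}` as a list of generator indices. -/
def word (n : ℕ) (α : Fin n → ℕ) : List (Fin n) :=
  (List.finRange n).flatMap fun i => List.replicate (α i) i

/-- The symmetrization `symz(X^(α)) = (1/m!) ∑_{σ ∈ Σₘ} X'_{σ(1)} ⋯ X'_{σ(m)}`
of the monomial `X^(α)` in the free associative algebra. -/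
def symz (K : Type) [Field K] (n : ℕ) (α : Fin n → ℕ) : FreeAlgebra K (Fin n) :=
  ((Nat.factorial (word n α).length : K))⁻¹ •
    ∑ σ : Equiv.Perm (Fin (word n α).length),
      (List.ofFn fun j => FreeAlgebra.ι K ((word n α).get (σ j))).prod

/-- Regular homogeneous polynomials of degree `m`: the span of `m`-th powers of
linear forms in the generators. -/
def RegHom (K : Type) [Field K] (n m : ℕ) : Submodule K (FreeAlgebra K (Fin n)) :=
  Submodule.span K {x | ∃ c : Fin n → K, x = (∑ i, c i • FreeAlgebra.ι K i) ^ m}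

/-- Regular polynomials: the span of all powers of linear forms in the generators. -/
def Reg (K : Type) [Field K] (n : ℕ) : Submodule K (FreeAlgebra K (Fin n)) :=
  Submodule.span K {x | ∃ (m : ℕ) (c : Fin n → K), x = (∑ i, c i • FreeAlgebra.ι K i) ^ m}

/-- The symmetrization map `Φ` from commutative polynomials to the free algebra,
sending `x^(α)` to `symz(X^(α))` and extended linearly. -/
def Phi (K : Type) [Field K] (n : ℕ) (p : MvPolynomial (Fin n) K) : FreeAlgebra K (Fin n) :=
  ∑ d ∈ p.support, p.coeff d • symz K n (fun i => d i)

namespace SymAux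

variable (K : Type) [Field K] {n : ℕ}

/-- ordered product of generators along `g`. -/
def pr {m : ℕ} (g : Fin m → Fin n) : FreeAlgebra K (Fin n) :=
  (List.ofFn fun j => FreeAlgebra.ι K (g j)).prod

/-- content (fiber count) of a map. -/
def ct {m : ℕ} (g : Fin m → Fin n) (x : Fin n) : ℕ :=
  (Finset.univ.filter fun j => g j = x).card

lemma ct_comp_equiv {m M : ℕ} (g : Fin M → Fin n) (e : Fin m ≃ Fin M) :
    ct (g ∘ e) = ct g := by
  funext x
  exact Finset.card_bij (fun j _ => e j)
    (by simp [Function.comp])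
    (fun a ha b hb hab => e.injective hab)
    (fun b hb => ⟨e.symm b, by simpa using by simpa using hb, by simp⟩)

lemma sum_ct {m : ℕ} (g : Fin m → Fin n) : ∑ x, ct g x = m := by
  classical
  have := (Finset.card_eq_sum_card_fiberwise
    (f := g) (s := Finset.univ) (t := Finset.univ) (fun x _ => Finset.mem_univ _))
  simpa [ct] using this.symm

lemma count_ofFn {m : ℕ} (g : Fin m → Fin n) (x : Fin n) :
    (List.ofFn g).count x = ct g x := by
  classical
  rw [List.ofFn_eq_map, ct, List.count_eq_countP, List.countP_map,
    List.countP_eq_length_filter]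
  rw [Fin.univ_def]
  rw [Finset.filter]
  simp only [Finset.card, Multiset.filter_coe, Multiset.coe_card]
  congr 1

lemma length_word (α : Fin n → ℕ) : (word n α).length = ∑ i, α i := by
  rw [word, List.length_flatMap]
  have : (List.map (List.length ∘ fun i => List.replicate (α i) i) (List.finRange n)).sum
      = ∑ i : Fin n, (List.length ∘ fun i => List.replicate (α i) i) i := rfl
  erw [this]
  simp

lemma count_word (α : Fin n → ℕ) (x : Fin n) : (word n α).count x = α x := by
  classical
  rw [word, List.count_flatMap]
  have : (List.map (List.count x ∘ fun i => List.replicate (α i) i) (List.finRange n)).sum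
      = ∑ i : Fin n, (List.count x ∘ fun i => List.replicate (α i) i) i := rfl
  rw [this]
  have h2 : ∀ i : Fin n, (List.count x ∘ fun i => List.replicate (α i) i) i
      = if x = i then α i else 0 := by
    intro i
    rw [Function.comp_apply, List.count_replicate]
    simp only [beq_iff_eq]
    exact if_congr eq_comm rfl rfl
  rw [Finset.sum_congr rfl fun i _ => h2 i]
  simp

lemma ct_eq_card {m : ℕ} (g : Fin m → Fin n) (x : Fin n) :
    ct g x = Fintype.card {j // g j = x} := by
  classical
  rw [Fintype.card_subtype, ct]

lemma exists_comp_perm {m : ℕ} {g g' : Fin m → Fin n} (h : ct g = ct g') :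
    ∃ π : Equiv.Perm (Fin m), g' = g ∘ π := by
  classical
  have e : ∀ x, {j // g' j = x} ≃ {j // g j = x} := fun x =>
    Fintype.equivOfCardEq (by rw [← ct_eq_card, ← ct_eq_card, h])
  refine ⟨(Equiv.sigmaFiberEquiv g').symm.trans
    ((Equiv.sigmaCongrRight e).trans (Equiv.sigmaFiberEquiv g)), ?_⟩
  funext j
  simp only [Function.comp_apply, Equiv.trans_apply, Equiv.sigmaFiberEquiv,
    Equiv.sigmaCongrRight, Equiv.coe_fn_mk, Equiv.coe_fn_symm_mk]
  exact ((e (g' j)) ⟨j, rfl⟩).2.symm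

/-- symmetrization of `g`. -/
def SS {m : ℕ} (g : Fin m → Fin n) : FreeAlgebra K (Fin n) :=
  ∑ σ : Equiv.Perm (Fin m), pr K (g ∘ σ)

theorem SS_comp_perm {m : ℕ} (g : Fin m → Fin n) (π : Equiv.Perm (Fin m)) :
    SS K (g ∘ π) = SS K g := by
  rw [SS, SS]
  refine Fintype.sum_bijective (fun σ => π * σ) (Group.mulLeft_bijective π) _ _ fun σ => ?_
  congr 1

lemma SS_eq_of_ct_eq {m : ℕ} {g g' : Fin m → Fin n} (h : ct g = ct g') :
    SS K g = SS K g' := by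
  obtain ⟨π, rfl⟩ := exists_comp_perm h
  exact (SS_comp_perm K g π).symm

/-- canonical representative with content α. -/
def g0 {m : ℕ} (α : Fin n → ℕ) (h : (word n α).length = m) : Fin m → Fin n :=
  fun j => (word n α).get (Fin.cast h.symm j)

lemma ct_g0 {m : ℕ} (α : Fin n → ℕ) (h : (word n α).length = m) :
    ct (g0 α h) = α := by
  have h1 : g0 α h = (word n α).get ∘ (finCongr h.symm) := rfl
  rw [h1, ct_comp_equiv]
  funext x
  rw [← count_ofFn, List.ofFn_get, count_word]

lemma symz_eq {m : ℕ} (α : Fin n → ℕ) (h : (word n α).length = m) :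
    symz K n α = ((Nat.factorial m : K))⁻¹ • SS K (g0 α h) := by
  subst h
  rfl

lemma list_prod_map_smul {A : Type*} [Ring A] [Algebra K A] {ι : Type*} (l : List ι)
    (c : ι → K) (v : ι → A) :
    (l.map fun x => c x • v x).prod = (l.map c).prod • (l.map v).prod := by
  induction l with
  | nil => simp
  | cons a t ih =>
    simp only [List.map_cons, List.prod_cons, ih, smul_mul_assoc, mul_smul_comm, mul_smul]
    rw [smul_comm]

lemma list_prod_map_ite {A : Type*} [Ring A] {ι : Type*} (l : List ι) (p : ι → Prop)
    [DecidablePred p] (v : ι → A) :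
    (l.map fun x => if p x then v x else 0).prod
      = if ∀ x ∈ l, p x then (l.map v).prod else 0 := by
  induction l with
  | nil => simp
  | cons a t ih =>
    by_cases ha : p a
    · by_cases ht : ∀ x ∈ t, p x <;> simp [ha, ht, ih]
    · simp [ha]

lemma pow_sum_univ {A : Type*} [Ring A] {ι : Type*} [Fintype ι] [DecidableEq ι]
    (v : ι → A) (m : ℕ) :
    (∑ x, v x) ^ m = ∑ g : Fin m → ι, (List.ofFn fun j => v (g j)).prod := by
  induction m with
  | zero => simp
  | succ m ih =>
    calc (∑ x, v x) ^ (m+1) = (∑ x, v x) * ∑ g : Fin m → ι, (List.ofFn fun j => v (g j)).prod := by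
          rw [pow_succ', ih]
      _ = ∑ p : ι × (Fin m → ι), v p.1 * (List.ofFn fun j => v (p.2 j)).prod := by
          rw [Fintype.sum_prod_type]
          simp only [Finset.sum_mul, Finset.mul_sum]
          rw [Finset.sum_comm]
      _ = ∑ g : Fin (m+1) → ι, (List.ofFn fun j => v (g j)).prod := by
          refine Fintype.sum_equiv (Fin.consEquiv fun _ => ι) _ _ fun p => ?_
          simp [List.ofFn_succ, Fin.consEquiv]

lemma neg_one_pow_sub (a b : ℕ) (h : b ≤ a) : (-1 : ℤ) ^ (a - b) = (-1) ^ a * (-1) ^ b := by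
  have h2 : (-1 : ℤ) ^ (b + b) = 1 := by
    rw [← two_mul, pow_mul]; norm_num
  calc (-1 : ℤ) ^ (a - b) = (-1) ^ (a - b) * ((-1) ^ (b + b)) := by rw [h2, mul_one]
    _ = (-1) ^ ((a - b) + b) * (-1) ^ b := by rw [← pow_add, ← pow_add]; ring_nf
    _ = (-1) ^ a * (-1) ^ b := by rw [Nat.sub_add_cancel h]

lemma coeff_sum (m : ℕ) (f : Fin m → Fin m) :
    (∑ S : Finset (Fin m), if ∀ j, f j ∈ S then (-1 : ℤ) ^ (m - S.card) else 0)
      = if Function.Surjective f then 1 else 0 := by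
  classical
  set T : Finset (Fin m) := Finset.image f Finset.univ with hT
  have hcond : ∀ S : Finset (Fin m), (∀ j, f j ∈ S) ↔ T ⊆ S := by
    intro S
    constructor
    · intro h x hx
      obtain ⟨j, -, rfl⟩ := Finset.mem_image.mp hx
      exact h j
    · intro h j
      exact h (Finset.mem_image_of_mem f (Finset.mem_univ j))
  simp only [hcond]
  rw [Finset.sum_ite, Finset.sum_const_zero, add_zero]
  have hbij : ∑ S ∈ Finset.univ.filter (fun S => T ⊆ S), (-1 : ℤ) ^ (m - S.card)
      = ∑ U ∈ Tᶜ.powerset, (-1 : ℤ) ^ (m - (T ∪ U).card) := by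
    refine Finset.sum_bij' (fun S _ => S \ T) (fun U _ => T ∪ U) ?_ ?_ ?_ ?_ ?_
    · intro S hS
      simp only [Finset.mem_powerset]
      intro x hx
      simp only [Finset.mem_sdiff] at hx
      simp [Finset.mem_compl, hx.2]
    · intro U hU
      simp only [Finset.mem_filter, Finset.mem_univ, true_and]
      exact Finset.subset_union_left
    · intro S hS
      simp only [Finset.mem_filter, Finset.mem_univ, true_and] at hS
      exact Finset.union_sdiff_of_subset hS
    · intro U hU
      simp only [Finset.mem_powerset] at hU
      refine Finset.union_sdiff_cancel_left ?_
      refine Finset.disjoint_left.mpr fun a haT haU => ?_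
      have := hU haU
      simp only [Finset.mem_compl] at this
      exact this haT
    · intro S hS
      simp only [Finset.mem_filter, Finset.mem_univ, true_and] at hS
      rw [Finset.union_sdiff_of_subset hS]
  rw [hbij]
  have hcard : ∀ U ∈ Tᶜ.powerset, (-1 : ℤ) ^ (m - (T ∪ U).card)
      = (-1 : ℤ) ^ (Tᶜ.card) * (-1 : ℤ) ^ U.card := by
    intro U hU
    rw [Finset.mem_powerset] at hU
    have hdisj : Disjoint T U := by
      refine Finset.disjoint_left.mpr fun a haT haU => ?_
      have := hU haU
      simp only [Finset.mem_compl] at this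
      exact this haT
    have h1 : U.card ≤ Tᶜ.card := Finset.card_le_card hU
    have h2 : T.card + Tᶜ.card = m := by
      simpa using Finset.card_add_card_compl T
    rw [Finset.card_union_of_disjoint hdisj,
      show m - (T.card + U.card) = Tᶜ.card - U.card from by omega,
      neg_one_pow_sub _ _ h1]
  rw [Finset.sum_congr rfl hcard, ← Finset.mul_sum,
    Finset.sum_powerset_neg_one_pow_card]
  by_cases hs : Function.Surjective f
  · have : T = Finset.univ := by
      rw [hT]
      exact Finset.image_univ_of_surjective hs
    simp [this, hs]
  · have hne : T ≠ Finset.univ := by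
      intro hTu
      refine hs fun x => ?_
      have : x ∈ T := hTu ▸ Finset.mem_univ x
      obtain ⟨j, -, hj⟩ := Finset.mem_image.mp this
      exact ⟨j, hj⟩
    have : Tᶜ ≠ ∅ := by
      simp only [ne_eq, Finset.compl_eq_empty_iff]
      exact hne
    simp [this, hs]

lemma polarization {A : Type*} [Ring A] {m : ℕ} (v : Fin m → A) :
    ∑ σ : Equiv.Perm (Fin m), (List.ofFn fun j => v (σ j)).prod
      = ∑ S : Finset (Fin m), (-1 : ℤ) ^ (m - S.card) • (∑ i ∈ S, v i) ^ m := by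
  classical
  have hS : ∀ S : Finset (Fin m), (∑ i ∈ S, v i)
      = ∑ i : Fin m, (if i ∈ S then v i else 0) := by
    intro S
    rw [Finset.sum_ite_mem, Finset.univ_inter]
  have step1 : ∀ S : Finset (Fin m), (∑ i ∈ S, v i) ^ m
      = ∑ f : Fin m → Fin m,
          if ∀ j, f j ∈ S then (List.ofFn fun j => v (f j)).prod else 0 := by
    intro S
    rw [hS, pow_sum_univ]
    refine Finset.sum_congr rfl fun f _ => ?_
    have : (List.ofFn fun j => if f j ∈ S then v (f j) else 0)
        = (List.ofFn f).map fun x => if x ∈ S then v x else 0 := by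
      rw [List.map_ofFn]; rfl
    rw [this, list_prod_map_ite, List.map_ofFn]
    congr 1
    · simp only [eq_iff_iff]
      constructor
      · intro h j
        exact h (f j) (by simp [List.mem_ofFn])
      · intro h x hx
        obtain ⟨j, rfl⟩ := List.mem_ofFn.mp hx
        exact h j
  calc ∑ σ : Equiv.Perm (Fin m), (List.ofFn fun j => v (σ j)).prod
      = ∑ f ∈ Finset.univ.filter (fun f : Fin m → Fin m => Function.Surjective f),
          (List.ofFn fun j => v (f j)).prod := by
        refine (Finset.sum_bij' (fun (f : Fin m → Fin m) hf => Equiv.ofBijective f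
            ((Fintype.bijective_iff_surjective_and_card f).mpr
              ⟨(Finset.mem_filter.mp hf).2, rfl⟩))
          (fun σ _ => ⇑σ) ?_ ?_ ?_ ?_ ?_).symm
        · intro σ _; exact Finset.mem_univ _
        · intro σ _
          simp only [Finset.mem_filter, Finset.mem_univ, true_and]
          exact σ.surjective
        · intro f hf; rfl
        · intro σ _
          ext x
          rfl
        · intro f hf; rfl
    _ = ∑ f : Fin m → Fin m,
          (if Function.Surjective f then (1 : ℤ) else 0) • (List.ofFn fun j => v (f j)).prod := by
        rw [Finset.sum_filter]
        refine Finset.sum_congr rfl fun f _ => ?_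
        rw [ite_smul, one_smul, zero_smul]
    _ = ∑ f : Fin m → Fin m,
          (∑ S : Finset (Fin m), if ∀ j, f j ∈ S then (-1 : ℤ) ^ (m - S.card) else 0)
            • (List.ofFn fun j => v (f j)).prod := by
        refine Finset.sum_congr rfl fun f _ => ?_
        rw [coeff_sum]
    _ = ∑ S : Finset (Fin m), (-1 : ℤ) ^ (m - S.card) • (∑ i ∈ S, v i) ^ m := by
        simp only [Finset.sum_smul, step1, Finset.smul_sum, smul_ite, smul_zero,
          ite_smul, zero_smul]
        rw [Finset.sum_comm]

/-- coefficient functional. -/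
def coeffAt (w : FreeMonoid (Fin n)) : FreeAlgebra K (Fin n) →ₗ[K] K :=
  (Finsupp.lapply w) ∘ₗ (MonoidAlgebra.coeffLinearEquiv K).toLinearMap ∘ₗ (FreeAlgebra.equivMonoidAlgebraFreeMonoid (R := K) (X := Fin n)).toLinearMap

lemma equiv_ι (x : Fin n) :
    FreeAlgebra.equivMonoidAlgebraFreeMonoid (R := K) (X := Fin n) (FreeAlgebra.ι K x)
      = MonoidAlgebra.single (FreeMonoid.of x) 1 := by
  simp [FreeAlgebra.equivMonoidAlgebraFreeMonoid, FreeAlgebra.lift_ι_apply,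
    MonoidAlgebra.of_apply]

lemma ml_prod_single (l : List (Fin n)) :
    (l.map fun x => MonoidAlgebra.single (M := FreeMonoid (Fin n)) (R := K)
        (FreeMonoid.of x) 1).prod
      = MonoidAlgebra.single (FreeMonoid.ofList l) 1 := by
  induction l with
  | nil => simp [MonoidAlgebra.one_def]
  | cons a t ih =>
    rw [List.map_cons, List.prod_cons, ih, MonoidAlgebra.single_mul_single, one_mul,
      FreeMonoid.ofList_cons]

open Classical in
lemma coeffAt_pr {m : ℕ} (g : Fin m → Fin n) (w : FreeMonoid (Fin n)) :
    coeffAt K w (pr K g) = if FreeMonoid.ofList (List.ofFn g) = w then 1 else 0 := by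
  have h1 : FreeAlgebra.equivMonoidAlgebraFreeMonoid (R := K) (X := Fin n) (pr K g)
      = MonoidAlgebra.single (FreeMonoid.ofList (List.ofFn g)) 1 := by
    rw [pr, map_list_prod]
    have : (List.map (⇑(FreeAlgebra.equivMonoidAlgebraFreeMonoid (R := K) (X := Fin n)))
        (List.ofFn fun j => FreeAlgebra.ι K (g j)))
        = (List.ofFn g).map fun x => MonoidAlgebra.single (M := FreeMonoid (Fin n)) (R := K)
            (FreeMonoid.of x) 1 := by
      rw [List.map_ofFn, List.map_ofFn]
      congr 1
      funext j
      exact equiv_ι K (g j)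
    rw [this, ml_prod_single]
  rw [coeffAt, LinearMap.comp_apply, LinearMap.comp_apply]
  erw [h1]
  simp [Finsupp.lapply, Finsupp.single_apply, MonoidAlgebra.coeffLinearEquiv, MonoidAlgebra.coeff_single]

open Classical in
lemma coeffAt_symz {m : ℕ} (α : Fin n → ℕ) (h : (word n α).length = m) (w : FreeMonoid (Fin n)) :
    coeffAt K w (symz K n α)
      = (Nat.factorial m : K)⁻¹ *
        ((Finset.univ.filter fun σ : Equiv.Perm (Fin m) =>
          FreeMonoid.ofList (List.ofFn (g0 α h ∘ σ)) = w).card : K) := by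
  rw [symz_eq K α h, map_smul, SS, map_sum, smul_eq_mul]
  congr 1
  simp only [coeffAt_pr]
  rw [Finset.sum_boole]

lemma coeff_symz_ne {m : ℕ} (α β : Fin n → ℕ) (hα : (word n α).length = m)
    (hβ : (word n β).length = m) (hne : α ≠ β) :
    coeffAt K (FreeMonoid.ofList (List.ofFn (g0 β hβ))) (symz K n α) = 0 := by
  classical
  rw [coeffAt_symz K α hα]
  have hempty : (Finset.univ.filter fun σ : Equiv.Perm (Fin m) =>
      FreeMonoid.ofList (List.ofFn (g0 α hα ∘ σ)) = FreeMonoid.ofList (List.ofFn (g0 β hβ))) = ∅ := by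
    rw [Finset.filter_eq_empty_iff]
    intro σ _
    intro hcontra
    apply hne
    have hlists : List.ofFn (g0 α hα ∘ σ) = List.ofFn (g0 β hβ) :=
      FreeMonoid.ofList.injective hcontra
    have hcounts : ct (g0 α hα ∘ σ) = ct (g0 β hβ) := by
      funext x
      rw [← count_ofFn, ← count_ofFn, hlists]
    rw [ct_comp_equiv, ct_g0, ct_g0] at hcounts
    exact hcounts
  rw [hempty]
  simp

lemma coeff_symz_self [CharZero K] {m : ℕ} (β : Fin n → ℕ) (hβ : (word n β).length = m) :
    coeffAt K (FreeMonoid.ofList (List.ofFn (g0 β hβ))) (symz K n β) ≠ 0 := by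
  classical
  rw [coeffAt_symz K β hβ]
  refine mul_ne_zero (inv_ne_zero ?_) ?_
  · exact Nat.cast_ne_zero.mpr (Nat.factorial_ne_zero m)
  · rw [Nat.cast_ne_zero, ← Nat.pos_iff_ne_zero, Finset.card_pos]
    refine ⟨1, ?_⟩
    simp only [Finset.mem_filter, Finset.mem_univ, true_and]
    congr 1

lemma sum_fiber_smul {m : ℕ} (g : Fin m → Fin n) (S : Finset (Fin m)) :
    ∑ i ∈ S, FreeAlgebra.ι K (g i)
      = ∑ x, (((S.filter fun i => g i = x).card : K)) • FreeAlgebra.ι K x := by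
  classical
  rw [← Finset.sum_fiberwise_of_maps_to (g := g) (t := Finset.univ)
    (fun i _ => Finset.mem_univ _) (fun i => FreeAlgebra.ι K (g i))]
  refine Finset.sum_congr rfl fun x _ => ?_
  rw [Finset.sum_congr rfl fun i hi => by
    rw [(Finset.mem_filter.mp hi).2]]
  rw [Finset.sum_const, Nat.cast_smul_eq_nsmul]

lemma symz_mem_RegHom {m : ℕ} (α : Fin n → ℕ) (h : (word n α).length = m) :
    symz K n α ∈ RegHom K n m := by
  classical
  rw [symz_eq K α h]
  refine Submodule.smul_mem _ _ ?_
  rw [SS]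
  have hpol := polarization (fun j => FreeAlgebra.ι K (g0 α h j))
  rw [show (∑ σ : Equiv.Perm (Fin m), pr K (g0 α h ∘ σ))
      = ∑ σ : Equiv.Perm (Fin m),
          (List.ofFn fun j => FreeAlgebra.ι K (g0 α h (σ j))).prod from rfl, hpol]
  refine Submodule.sum_mem _ fun S _ => ?_
  rw [← Int.cast_smul_eq_zsmul K]
  refine Submodule.smul_mem _ _ ?_
  refine Submodule.subset_span ?_
  refine ⟨fun x => ((S.filter fun i => g0 α h i = x).card : K), ?_⟩
  rw [sum_fiber_smul]

lemma prod_comp_eq {m : ℕ} (c : Fin n → K) (g : Fin m → Fin n) :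
    ∏ j, c (g j) = ∏ x, c x ^ ct g x := by
  classical
  rw [← Finset.prod_fiberwise_of_maps_to (g := g) (t := Finset.univ)
    (fun i _ => Finset.mem_univ _) (fun j => c (g j))]
  refine Finset.prod_congr rfl fun x _ => ?_
  rw [Finset.prod_congr rfl fun i hi => by rw [(Finset.mem_filter.mp hi).2],
    Finset.prod_const, ct]

lemma T_mem_span [CharZero K] {m : ℕ} (α : Fin n → ℕ) (g₁ : Fin m → Fin n) (hg₁ : ct g₁ = α) :
    (∑ g ∈ Finset.univ.filter (fun g : Fin m → Fin n => ct g = α), pr K g)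
      ∈ Submodule.span K
          (Set.range fun β : {β : Fin n → ℕ // ∑ i, β i = m} => symz K n β.1) := by
  classical
  have hsum : ∑ x, α x = m := by rw [← hg₁]; exact sum_ct g₁
  have hword : (word n α).length = m := (length_word α).trans hsum
  set F := Finset.univ.filter (fun g : Fin m → Fin n => ct g = α) with hF
  set T := ∑ g ∈ F, pr K g with hTdef
  have hfix : ∀ σ : Equiv.Perm (Fin m), ∑ g ∈ F, pr K (g ∘ σ) = T := by
    intro σ
    refine Finset.sum_nbij' (i := fun g => g ∘ ⇑σ) (j := fun g => g ∘ ⇑σ⁻¹) ?_ ?_ ?_ ?_ ?_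
    · intro g hg
      simp only [hF, Finset.mem_filter, Finset.mem_univ, true_and] at hg ⊢
      rw [ct_comp_equiv, hg]
    · intro g hg
      simp only [hF, Finset.mem_filter, Finset.mem_univ, true_and] at hg ⊢
      rw [ct_comp_equiv, hg]
    · intro g _
      funext j; simp
    · intro g _
      funext j; simp
    · intro g _
      rfl
  have hkey : (Nat.factorial m : K) • T = (F.card : K) • SS K (g0 α hword) := by
    have h1 : ∑ σ : Equiv.Perm (Fin m), ∑ g ∈ F, pr K (g ∘ σ)
        = (Fintype.card (Equiv.Perm (Fin m))) • T := by
      rw [Finset.sum_congr rfl fun σ _ => hfix σ, Finset.sum_const, Finset.card_univ]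
    have h2 : ∑ σ : Equiv.Perm (Fin m), ∑ g ∈ F, pr K (g ∘ σ)
        = F.card • SS K (g0 α hword) := by
      rw [Finset.sum_comm]
      rw [Finset.sum_congr rfl fun g hg => show (∑ σ : Equiv.Perm (Fin m), pr K (g ∘ σ))
          = SS K (g0 α hword) from by
        rw [show (∑ σ : Equiv.Perm (Fin m), pr K (g ∘ σ)) = SS K g from rfl]
        refine SS_eq_of_ct_eq K ?_
        rw [ct_g0]
        exact (Finset.mem_filter.mp hg).2]
      rw [Finset.sum_const]
    rw [Nat.cast_smul_eq_nsmul, Nat.cast_smul_eq_nsmul,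
      show m.factorial = Fintype.card (Equiv.Perm (Fin m)) from by
        rw [Fintype.card_perm, Fintype.card_fin], ← h1, h2]
  have hSS : SS K (g0 α hword) = (Nat.factorial m : K) • symz K n α := by
    rw [symz_eq K α hword, smul_smul, mul_inv_cancel₀
      (Nat.cast_ne_zero.mpr (Nat.factorial_ne_zero m)), one_smul]
  have hT : T = (Nat.factorial m : K)⁻¹ • ((F.card : K) • ((Nat.factorial m : K) • symz K n α)) := by
    rw [← hSS, ← hkey, smul_smul, inv_mul_cancel₀
      (Nat.cast_ne_zero.mpr (Nat.factorial_ne_zero m)), one_smul]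
  rw [hT]
  refine Submodule.smul_mem _ _ (Submodule.smul_mem _ _ (Submodule.smul_mem _ _ ?_))
  exact Submodule.subset_span ⟨⟨α, hsum⟩, rfl⟩

lemma pow_mem_span [CharZero K] (c : Fin n → K) (m : ℕ) :
    (∑ i, c i • FreeAlgebra.ι K i) ^ m
      ∈ Submodule.span K
          (Set.range fun β : {β : Fin n → ℕ // ∑ i, β i = m} => symz K n β.1) := by
  classical
  rw [pow_sum_univ]
  have hsummand : ∀ g : Fin m → Fin n,
      (List.ofFn fun j => c (g j) • FreeAlgebra.ι K (g j)).prod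
        = (∏ x, c x ^ ct g x) • pr K g := by
    intro g
    have h1 : (List.ofFn fun j => c (g j) • FreeAlgebra.ι K (g j))
        = (List.ofFn g).map fun x => c x • FreeAlgebra.ι K x := by
      rw [List.map_ofFn]; rfl
    rw [h1, list_prod_map_smul]
    congr 1
    · rw [List.map_ofFn, List.prod_ofFn]
      exact prod_comp_eq K c g
    · rw [pr, List.map_ofFn]; rfl
  rw [Finset.sum_congr rfl fun g _ => hsummand g]
  rw [← Finset.sum_fiberwise_of_maps_to (g := ct)
    (t := Finset.univ.image (ct (n := n) (m := m)))
    (fun g _ => Finset.mem_image_of_mem _ (Finset.mem_univ g))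
    (fun g => (∏ x, c x ^ ct g x) • pr K g)]
  refine Submodule.sum_mem _ fun y hy => ?_
  obtain ⟨g₁, -, hg₁⟩ := Finset.mem_image.mp hy
  have hconst : ∑ g ∈ Finset.univ.filter (fun g : Fin m → Fin n => ct g = y),
      (∏ x, c x ^ ct g x) • pr K g
      = (∏ x, c x ^ y x) • ∑ g ∈ Finset.univ.filter (fun g : Fin m → Fin n => ct g = y),
          pr K g := by
    rw [Finset.smul_sum]
    refine Finset.sum_congr rfl fun g hg => ?_
    rw [(Finset.mem_filter.mp hg).2]
  rw [hconst]
  exact Submodule.smul_mem _ _ (T_mem_span K y g₁ hg₁)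

end SymAux

open SymAux in
theorem symmetrized_monomials_basis_of_RegHom (K : Type) [Field K] [CharZero K]
    (n m : ℕ) :
    LinearIndependent K
        (fun α : {α : Fin n → ℕ // ∑ i, α i = m} => symz K n α.1) ∧
      Submodule.span K
          (Set.range fun α : {α : Fin n → ℕ // ∑ i, α i = m} => symz K n α.1)
        = RegHom K n m := by
  classical
  constructor
  · rw [linearIndependent_iff]
    intro l hl
    refine Finsupp.ext fun β => ?_
    show l β = 0
    have hβw : (word n β.1).length = m := (length_word β.1).trans β.2
    set w := FreeMonoid.ofList (List.ofFn (g0 β.1 hβw)) with hw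
    have h := congrArg (coeffAt K w) hl
    rw [map_zero, Finsupp.linearCombination_apply, map_finsuppSum] at h
    have hsum : (l.sum fun α a => coeffAt K w (a • symz K n α.1))
        = l β * coeffAt K w (symz K n β.1) := by
      rw [Finsupp.sum_eq_single β
        (fun α _ hne => by
          rw [map_smul, smul_eq_mul,
            coeff_symz_ne K α.1 β.1 ((length_word α.1).trans α.2) hβw
              (fun hc => hne (Subtype.ext hc)), mul_zero])
        (fun _ => by rw [zero_smul, map_zero])]
      rw [map_smul, smul_eq_mul]
    rw [hsum] at h
    exact (mul_eq_zero.mp h).resolve_right (coeff_symz_self K β.1 hβw)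
  · apply le_antisymm
    · rw [Submodule.span_le]
      rintro x ⟨α, rfl⟩
      exact symz_mem_RegHom K α.1 ((length_word α.1).trans α.2)
    · rw [RegHom, Submodule.span_le]
      rintro x ⟨c, rfl⟩
      exact pow_mem_span K c m


end
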